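/- Fix $4\le r\le 7$, $d=9-r$. For two exceptional classes $e = -\tfrac1d K_r + x$ and $e' = -\tfrac1d K_r + \omega$ in $N_r$ (with $x\in W\omega$), the intersection index satisfies $(e,e') = \tfrac1d + (x,\omega)$; moreover $(e,e')=0$ if and only if $x$ and $\omega$ are adjacent vertices of $\mathrm{Conv}(W\omega)$, and $(e,e')>0$ for all other $x\neq\omega$. -/

import Mathlib

set_option maxHeartbeats 1000000

def NformR (r : ℕ) (x y : Fin (r + 1) → ℝ) : ℝ :=
  ∑ i : Fin (r + 1), if i = 0 then x i * y i else -(x i * y i)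

def KvecR (r : ℕ) : Fin (r + 1) → ℝ := fun i => if i = 0 then -3 else 1

def IsIntegralVec (r : ℕ) (x : Fin (r + 1) → ℝ) : Prop := ∀ i, ∃ n : ℤ, x i = n

/-- `x ∈ Wω` iff `-(1/d)K_r + x` is an exceptional class of the lattice `N_r`. -/
def WeightOrbit (r : ℕ) : Set (Fin (r + 1) → ℝ) :=
  {x | IsIntegralVec r ((-(1 / (9 - (r : ℝ)))) • KvecR r + x) ∧
    NformR r ((-(1 / (9 - (r : ℝ)))) • KvecR r + x)
      ((-(1 / (9 - (r : ℝ)))) • KvecR r + x) = -1 ∧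
    NformR r ((-(1 / (9 - (r : ℝ)))) • KvecR r + x) (KvecR r) = -1}

/-- The fundamental weight `ω` dual to `β_{r-1}`: the projection `ℓ_r + (1/d)K_r`. -/
noncomputable def omegaR (r : ℕ) : Fin (r + 1) → ℝ :=
  (fun i => if i = Fin.last r then 1 else 0) + (1 / (9 - (r : ℝ))) • KvecR r

/-- Adjacency of vertices of the polytope `Conv(O)`: the segment `[x,y]` is an
edge, i.e. an extreme subset, of `Conv(O)`. -/
def Adjacent (r : ℕ) (O : Set (Fin (r + 1) → ℝ)) (x y : Fin (r + 1) → ℝ) : Prop :=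
  x ≠ y ∧ IsExtreme ℝ (convexHull ℝ O) (segment ℝ x y)

def NfZ (r : ℕ) (x y : Fin (r + 1) → ℤ) : ℤ :=
  ∑ i : Fin (r + 1), if i = 0 then x i * y i else -(x i * y i)

def KZ (r : ℕ) : Fin (r + 1) → ℤ := fun i => if i = 0 then -3 else 1

def EZ (r : ℕ) (j : Fin (r + 1)) : Fin (r + 1) → ℤ := fun i => if i = j then 1 else 0

lemma NfZ_cast (r : ℕ) (u v : Fin (r + 1) → ℤ) :
    NformR r (fun i => (u i : ℝ)) (fun i => (v i : ℝ)) = (NfZ r u v : ℝ) := by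
  unfold NformR NfZ
  push_cast
  exact Finset.sum_congr rfl fun i _ => by split <;> push_cast <;> ring

lemma NfZ_comm (r : ℕ) (x y : Fin (r + 1) → ℤ) : NfZ r x y = NfZ r y x :=
  Finset.sum_congr rfl fun i _ => by split <;> ring

lemma NfZ_add_left (r : ℕ) (a b y : Fin (r + 1) → ℤ) :
    NfZ r (a + b) y = NfZ r a y + NfZ r b y := by
  unfold NfZ
  rw [← Finset.sum_add_distrib]
  exact Finset.sum_congr rfl fun i _ => by simp only [Pi.add_apply]; split <;> ring

lemma NfZ_sub_left (r : ℕ) (a b y : Fin (r + 1) → ℤ) :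
    NfZ r (a - b) y = NfZ r a y - NfZ r b y := by
  unfold NfZ
  rw [← Finset.sum_sub_distrib]
  exact Finset.sum_congr rfl fun i _ => by simp only [Pi.sub_apply]; split <;> ring

lemma NfZ_add_right (r : ℕ) (x a b : Fin (r + 1) → ℤ) :
    NfZ r x (a + b) = NfZ r x a + NfZ r x b := by
  rw [NfZ_comm, NfZ_add_left, NfZ_comm r a, NfZ_comm r b]

lemma NfZ_sub_right (r : ℕ) (x a b : Fin (r + 1) → ℤ) :
    NfZ r x (a - b) = NfZ r x a - NfZ r x b := by
  rw [NfZ_comm, NfZ_sub_left, NfZ_comm r a, NfZ_comm r b]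

lemma NfZ_E_right (r : ℕ) (x : Fin (r + 1) → ℤ) (j : Fin (r + 1)) :
    NfZ r x (EZ r j) = if j = 0 then x 0 else -(x j) := by
  unfold NfZ EZ
  rw [Finset.sum_eq_single j]
  · split
    · subst j; simp
    · simp [*]
  · intro i _ hij
    simp [hij]
  · simp

lemma NfZ_E_left (r : ℕ) (x : Fin (r + 1) → ℤ) (j : Fin (r + 1)) :
    NfZ r (EZ r j) x = if j = 0 then x 0 else -(x j) := by
  rw [NfZ_comm, NfZ_E_right]

lemma NfZ_E_K (r : ℕ) (j : Fin (r + 1)) :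
    NfZ r (EZ r j) (KZ r) = if j = 0 then -3 else -1 := by
  rw [NfZ_comm, NfZ_E_right]
  unfold KZ
  split <;> simp [*]

lemma last_ne_zero (r : ℕ) (h4 : 4 ≤ r) : (Fin.last r) ≠ (0 : Fin (r + 1)) := by
  intro h
  have := congrArg Fin.val h
  simp [Fin.last] at this
  omega


def Tset (r : ℕ) : Finset (Fin (r + 1)) :=
  (Finset.univ.erase (0 : Fin (r + 1))).erase (Fin.last r)

-- split a sum over Fin (r+1) into 0, last, and the rest
lemma sum_split (r : ℕ) (h4 : 4 ≤ r) (g : Fin (r + 1) → ℤ) :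
    ∑ i : Fin (r + 1), g i =
      g 0 + g (Fin.last r) +
        ∑ i ∈ Tset r, g i := by
  unfold Tset
  rw [← Finset.add_sum_erase _ g (Finset.mem_univ (0 : Fin (r+1)))]
  rw [← Finset.add_sum_erase _ g
    (Finset.mem_erase.2 ⟨last_ne_zero r h4, Finset.mem_univ _⟩)]
  ring

lemma negdef (r : ℕ) (h4 : 4 ≤ r) (h7 : r ≤ 7) (v : Fin (r + 1) → ℤ)
    (hK : NfZ r v (KZ r) = 0) (hv : v ≠ 0) : NfZ r v v < 0 := by
  classical
  set s : Finset (Fin (r+1)) := Finset.univ.erase 0 with hs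
  have hcard : s.card = r := by
    rw [hs, Finset.card_erase_of_mem (Finset.mem_univ _)]
    simp
  have hKe : NfZ r v (KZ r) = -3 * v 0 - ∑ i ∈ s, v i := by
    unfold NfZ KZ
    rw [← Finset.add_sum_erase _ _ (Finset.mem_univ (0 : Fin (r+1)))]
    have : ∑ i ∈ s, (if i = 0 then v i * (if i = (0:Fin (r+1)) then (-3:ℤ) else 1) else -(v i * (if i = (0:Fin (r+1)) then (-3:ℤ) else 1))) = ∑ i ∈ s, -(v i) :=
      Finset.sum_congr rfl fun i hi => by
        have : i ≠ 0 := (Finset.mem_erase.1 hi).1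
        simp [this]
    rw [this, Finset.sum_neg_distrib]
    simp; ring
  have hvv : NfZ r v v = v 0 * v 0 - ∑ i ∈ s, v i * v i := by
    unfold NfZ
    rw [← Finset.add_sum_erase _ _ (Finset.mem_univ (0 : Fin (r+1)))]
    have : ∑ i ∈ s, (if i = 0 then v i * v i else -(v i * v i)) = ∑ i ∈ s, -(v i * v i) :=
      Finset.sum_congr rfl fun i hi => by
        have : i ≠ 0 := (Finset.mem_erase.1 hi).1
        simp [this]
    rw [this, Finset.sum_neg_distrib]
    simp; ring
  have hS : ∑ i ∈ s, v i = -3 * v 0 := by rw [hKe] at hK; linarith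
  have cheb : (∑ i ∈ s, v i) ^ 2 ≤ (s.card : ℤ) * ∑ i ∈ s, (v i) ^ 2 :=
    sq_sum_le_card_mul_sum_sq
  have hQ : ∑ i ∈ s, v i * v i = ∑ i ∈ s, (v i) ^ 2 :=
    Finset.sum_congr rfl fun i _ => by ring
  have hQ0 : 0 ≤ ∑ i ∈ s, (v i) ^ 2 := Finset.sum_nonneg fun i _ => sq_nonneg _
  rw [hvv, hQ]
  rcases eq_or_ne (v 0) 0 with h0 | h0
  · -- some other coord nonzero
    have : ∃ i, v i ≠ 0 := by
      by_contra h
      push_neg at h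
      exact hv (funext h)
    obtain ⟨i, hi⟩ := this
    have hi0 : i ≠ 0 := by rintro rfl; exact hi h0
    have hmem : i ∈ s := Finset.mem_erase.2 ⟨hi0, Finset.mem_univ _⟩
    have : (1 : ℤ) ≤ (v i) ^ 2 := by rcases lt_or_gt_of_ne hi with h|h <;> nlinarith
    have hle : (v i) ^ 2 ≤ ∑ j ∈ s, (v j) ^ 2 :=
      Finset.single_le_sum (fun j _ => sq_nonneg (v j)) hmem
    nlinarith
  · have h1 : (1 : ℤ) ≤ (v 0) ^ 2 := by rcases lt_or_gt_of_ne h0 with h|h <;> nlinarith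
    have hrr : (s.card : ℤ) ≤ 7 := by rw [hcard]; exact_mod_cast h7
    rw [hS] at cheb
    nlinarith [cheb, hQ0]

lemma pair_nonneg (r : ℕ) (h4 : 4 ≤ r) (h7 : r ≤ 7) (e f : Fin (r + 1) → ℤ)
    (he1 : NfZ r e e = -1) (he2 : NfZ r e (KZ r) = -1)
    (hf1 : NfZ r f f = -1) (hf2 : NfZ r f (KZ r) = -1)
    (hne : e ≠ f) : 0 ≤ NfZ r e f := by
  have hv : NfZ r (e - f) (KZ r) = 0 := by rw [NfZ_sub_left, he2, hf2]; ring
  have hvv : NfZ r (e - f) (e - f) = -2 - 2 * NfZ r e f := by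
    rw [NfZ_sub_left, NfZ_sub_right, NfZ_sub_right, he1, hf1, NfZ_comm r f e]
    ring
  have := negdef r h4 h7 (e - f) hv (sub_ne_zero.2 hne)
  omega

lemma Tset_ne (r : ℕ) {i : Fin (r + 1)} (hi : i ∈ Tset r) :
    i ≠ 0 ∧ i ≠ Fin.last r := by
  obtain ⟨h1, h2⟩ := Finset.mem_erase.1 hi
  exact ⟨(Finset.mem_erase.1 h2).1, h1⟩

lemma Tset_card (r : ℕ) (h4 : 4 ≤ r) : (Tset r).card = r - 1 := by
  unfold Tset
  rw [Finset.card_erase_of_mem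
    (Finset.mem_erase.2 ⟨last_ne_zero r h4, Finset.mem_univ _⟩),
    Finset.card_erase_of_mem (Finset.mem_univ _)]
  simp

lemma NfZ_split (r : ℕ) (h4 : 4 ≤ r) (x y : Fin (r + 1) → ℤ) :
    NfZ r x y = x 0 * y 0 - x (Fin.last r) * y (Fin.last r)
      - ∑ i ∈ Tset r, x i * y i := by
  unfold NfZ
  rw [sum_split r h4]
  have h1 : (if (0 : Fin (r+1)) = 0 then x 0 * y 0 else -(x 0 * y 0)) = x 0 * y 0 := by simp
  have h2 : (if (Fin.last r) = 0 then x (Fin.last r) * y (Fin.last r)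
      else -(x (Fin.last r) * y (Fin.last r))) = -(x (Fin.last r) * y (Fin.last r)) := by
    simp [last_ne_zero r h4]
  have h3 : ∑ i ∈ Tset r, (if i = 0 then x i * y i else -(x i * y i)) =
      -∑ i ∈ Tset r, x i * y i := by
    rw [← Finset.sum_neg_distrib]
    exact Finset.sum_congr rfl fun i hi => by simp [(Tset_ne r hi).1]
  rw [h1, h2, h3]
  ring

lemma EZ_exc (r : ℕ) {j : Fin (r + 1)} (hj : j ≠ 0) :
    NfZ r (EZ r j) (EZ r j) = -1 ∧ NfZ r (EZ r j) (KZ r) = -1 := by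
  constructor
  · rw [NfZ_E_right]
    simp [hj, EZ]
  · rw [NfZ_E_K]
    simp [hj]

lemma line_exc (r : ℕ) {i j : Fin (r + 1)} (hi : i ≠ 0) (hj : j ≠ 0) (hij : i ≠ j) :
    NfZ r (EZ r 0 - EZ r i - EZ r j) (EZ r 0 - EZ r i - EZ r j) = -1 ∧
    NfZ r (EZ r 0 - EZ r i - EZ r j) (KZ r) = -1 := by
  constructor
  · simp only [NfZ_sub_left, NfZ_sub_right, NfZ_E_right, NfZ_E_left]
    simp [EZ, hi, hj, hij, hij.symm, hi.symm, hj.symm, Ne.symm hi, Ne.symm hj]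
  · simp only [NfZ_sub_left, NfZ_E_K]
    simp [hi, hj]

lemma comb (r : ℕ) (h4 : 4 ≤ r) (h7 : r ≤ 7) (n : Fin (r + 1) → ℤ)
    (hsq : NfZ r n n = -1) (hK : NfZ r n (KZ r) = -1)
    (hge : ∀ f, NfZ r f f = -1 → NfZ r f (KZ r) = -1 → n ≠ f → 0 ≤ NfZ r n f)
    (hm : n (Fin.last r) ≤ -1) :
    (∃ i : Fin (r + 1), i ≠ 0 ∧ i ≠ Fin.last r ∧ n i = 1 + n (Fin.last r)) ∨
    (∃ i j : Fin (r + 1), i ≠ 0 ∧ j ≠ 0 ∧ i ≠ Fin.last r ∧ j ≠ Fin.last r ∧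
      i ≠ j ∧ n 0 + n i + n j = -1 - n (Fin.last r)) := by
  classical
  have hS : ∑ i ∈ Tset r, n i = 1 - 3 * n 0 - n (Fin.last r) := by
    have h := NfZ_split r h4 n (KZ r)
    have hT : ∑ i ∈ Tset r, n i * KZ r i = ∑ i ∈ Tset r, n i :=
      Finset.sum_congr rfl fun i hi => by simp [KZ, (Tset_ne r hi).1]
    rw [hK, hT] at h
    simp [KZ, last_ne_zero r h4] at h
    linarith
  have hQ : ∑ i ∈ Tset r, n i * n i = n 0 ^ 2 + 1 - n (Fin.last r) ^ 2 := by
    have h := NfZ_split r h4 n n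
    rw [hsq] at h
    nlinarith [h]
  have h0 : ∀ i ∈ Tset r, n i ≤ 0 := by
    intro i hi
    obtain ⟨hi0, hil⟩ := Tset_ne r hi
    obtain ⟨he1, he2⟩ := EZ_exc r hi0
    have hne : n ≠ EZ r i := by
      intro heq
      have h := congrFun heq (Fin.last r)
      simp only [EZ] at h
      split at h <;> omega
    have h := hge _ he1 he2 hne
    rw [NfZ_E_right, if_neg hi0] at h
    omega
  have hpair : ∀ i j : Fin (r + 1), i ≠ 0 → j ≠ 0 → i ≠ j → 2 ≤ n 0 →
      0 ≤ n 0 + n i + n j := by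
    intro i j hi hj hij ha2
    obtain ⟨hl1, hl2⟩ := line_exc r hi hj hij
    have hne : n ≠ EZ r 0 - EZ r i - EZ r j := by
      intro heq
      have h := congrFun heq 0
      simp [EZ, Ne.symm hi, Ne.symm hj] at h
      omega
    have h := hge _ hl1 hl2 hne
    simp only [NfZ_sub_right, NfZ_E_right] at h
    rw [if_neg hi, if_neg hj] at h
    simp at h
    omega
  -- global bounds
  have hcardN : (Tset r).card = r - 1 := Tset_card r h4
  have hcard : ((Tset r).card : ℤ) = (r : ℤ) - 1 := by rw [hcardN]; omega
  have hr7 : ((r : ℤ)) ≤ 7 := by exact_mod_cast h7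
  have hr4 : (4 : ℤ) ≤ (r : ℤ) := by exact_mod_cast h4
  have hSle : ∑ i ∈ Tset r, n i ≤ 0 := Finset.sum_nonpos h0
  have hB1 : 1 - 3 * n 0 - n (Fin.last r) ≤ 0 := hS ▸ hSle
  have ha1 : 1 ≤ n 0 := by omega
  have hQ0 : (0:ℤ) ≤ n 0 ^ 2 + 1 - n (Fin.last r) ^ 2 := by
    rw [← hQ]
    exact Finset.sum_nonneg fun i _ => mul_self_nonneg _
  have hml : -n (Fin.last r) ≤ n 0 := by nlinarith
  have hQsq : ∑ i ∈ Tset r, (n i) ^ 2 = n 0 ^ 2 + 1 - n (Fin.last r) ^ 2 := by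
    rw [← hQ]
    exact Finset.sum_congr rfl fun i _ => sq (n i)
  have cheb : (∑ i ∈ Tset r, n i) ^ 2 ≤ ((Tset r).card : ℤ) * ∑ i ∈ Tset r, (n i) ^ 2 :=
    sq_sum_le_card_mul_sum_sq
  rw [hS, hQsq, hcard] at cheb
  have cheb6 : (1 - 3 * n 0 - n (Fin.last r)) ^ 2 ≤ 6 * (n 0 ^ 2 + 1 - n (Fin.last r) ^ 2) := by
    nlinarith
  have ha3 : n 0 ≤ 3 := by nlinarith [sq_nonneg (n 0 + n (Fin.last r)), sq_nonneg (n 0 - 2 + n (Fin.last r))]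
  -- case analysis
  by_contra hcon
  push_neg at hcon
  obtain ⟨hc1, hc2⟩ := hcon
  have hl0 : Fin.last r ≠ 0 := last_ne_zero r h4
  have hacase : n 0 = 1 ∨ n 0 = 2 ∨ n 0 = 3 := by omega
  rcases hacase with ha | ha | ha
  · -- degree 1
    have hlm : n (Fin.last r) = -1 := by nlinarith
    have hall : ∀ i ∈ Tset r, n i ≤ -1 := by
      intro i hi
      have h1 := h0 i hi
      have h2 := hc1 i (Tset_ne r hi).1 (Tset_ne r hi).2
      omega
    have hsum : ∑ i ∈ Tset r, n i ≤ (Tset r).card • (-1 : ℤ) :=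
      Finset.sum_le_card_nsmul _ _ _ hall
    rw [hS, nsmul_eq_mul, hcard] at hsum
    omega
  · -- degree 2
    have hlcase : n (Fin.last r) = -1 ∨ n (Fin.last r) = -2 := by omega
    rcases hlcase with hlm | hlm
    · have hall : ∀ i ∈ Tset r, n i = -1 := by
        intro i hi
        have h1 := h0 i hi
        have h2 := hc1 i (Tset_ne r hi).1 (Tset_ne r hi).2
        have h3 := hpair i (Fin.last r) (Tset_ne r hi).1 hl0 (Tset_ne r hi).2 (by omega)
        omega
      have hcard2 : 1 < (Tset r).card := by omega
      obtain ⟨i, hi, j, hj, hij⟩ := Finset.one_lt_card.1 hcard2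
      have := hc2 i j (Tset_ne r hi).1 (Tset_ne r hj).1 (Tset_ne r hi).2 (Tset_ne r hj).2 hij
      have := hall i hi
      have := hall j hj
      omega
    · have hall : ∀ i ∈ Tset r, n i = 0 := by
        intro i hi
        have h1 := h0 i hi
        have h3 := hpair i (Fin.last r) (Tset_ne r hi).1 hl0 (Tset_ne r hi).2 (by omega)
        omega
      have hsum : ∑ i ∈ Tset r, n i = 0 := Finset.sum_eq_zero hall
      omega
  · -- degree 3
    have hlcase : n (Fin.last r) = -1 ∨ n (Fin.last r) = -2 ∨ n (Fin.last r) = -3 := by omega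
    rcases hlcase with hlm | hlm | hlm
    · -- m = 1 : middle coords in {-1,-2}, or a zero
      have hrange : ∀ i ∈ Tset r, n i = -1 ∨ n i = -2 := by
        intro i hi
        have h1 := h0 i hi
        have h2 := hc1 i (Tset_ne r hi).1 (Tset_ne r hi).2
        have h3 := hpair i (Fin.last r) (Tset_ne r hi).1 hl0 (Tset_ne r hi).2 (by omega)
        omega
      by_cases hex2 : ∃ i ∈ Tset r, n i = -2
      · obtain ⟨i, hi, hni⟩ := hex2
        by_cases hex1 : ∃ j ∈ Tset r, n j = -1
        · obtain ⟨j, hj, hnj⟩ := hex1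
          have hij : i ≠ j := by intro h; rw [h] at hni; omega
          have := hc2 i j (Tset_ne r hi).1 (Tset_ne r hj).1 (Tset_ne r hi).2 (Tset_ne r hj).2 hij
          omega
        · push_neg at hex1
          have hall : ∀ i ∈ Tset r, n i = -2 := by
            intro k hk
            have := hrange k hk
            have := hex1 k hk
            omega
          have hsum : ∑ i ∈ Tset r, n i = ∑ _i ∈ Tset r, (-2 : ℤ) :=
            Finset.sum_congr rfl hall
          rw [hS, Finset.sum_const, nsmul_eq_mul, hcard] at hsum
          omega
      · push_neg at hex2
        have hall : ∀ i ∈ Tset r, n i = -1 := by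
          intro k hk
          have := hrange k hk
          have := hex2 k hk
          omega
        have hsum : ∑ i ∈ Tset r, n i = ∑ _i ∈ Tset r, (-1 : ℤ) :=
          Finset.sum_congr rfl hall
        rw [hS, Finset.sum_const, nsmul_eq_mul, hcard] at hsum
        omega
    · -- m = 2 : all middles must be 0, contradicting the sum
      have hall : ∀ i ∈ Tset r, n i = 0 := by
        intro i hi
        have h1 := h0 i hi
        have h2 := hc1 i (Tset_ne r hi).1 (Tset_ne r hi).2
        have h3 := hpair i (Fin.last r) (Tset_ne r hi).1 hl0 (Tset_ne r hi).2 (by omega)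
        omega
      have hsum : ∑ i ∈ Tset r, n i = 0 := Finset.sum_eq_zero hall
      omega
    · -- m = 3
      have hall : ∀ i ∈ Tset r, n i = 0 := by
        intro i hi
        have h1 := h0 i hi
        have h3 := hpair i (Fin.last r) (Tset_ne r hi).1 hl0 (Tset_ne r hi).2 (by omega)
        omega
      have hsum : ∑ i ∈ Tset r, n i = 0 := Finset.sum_eq_zero hall
      omega

lemma build (r : ℕ) (h4 : 4 ≤ r) (n : Fin (r + 1) → ℤ)
    (hsq : NfZ r n n = -1) (hK : NfZ r n (KZ r) = -1) (hm : n (Fin.last r) ≤ -1)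
    (f' : Fin (r + 1) → ℤ)
    (hf1 : NfZ r f' f' = -1) (hf2 : NfZ r f' (KZ r) = -1)
    (hfl : f' (Fin.last r) = 0) (hnf : NfZ r n f' = -1 - n (Fin.last r)) :
    NfZ r (n + EZ r (Fin.last r) - f') (n + EZ r (Fin.last r) - f') = -1 ∧
    NfZ r (n + EZ r (Fin.last r) - f') (KZ r) = -1 ∧
    (n + EZ r (Fin.last r) - f') + f' = n + EZ r (Fin.last r) ∧
    (n + EZ r (Fin.last r) - f') ≠ n ∧
    (n + EZ r (Fin.last r) - f') ≠ EZ r (Fin.last r) := by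
  have hl0 : Fin.last r ≠ 0 := last_ne_zero r h4
  have hEl : ∀ y : Fin (r + 1) → ℤ, NfZ r y (EZ r (Fin.last r)) = -(y (Fin.last r)) := by
    intro y; rw [NfZ_E_right, if_neg hl0]
  refine ⟨?_, ?_, ?_, ?_, ?_⟩
  · simp only [NfZ_sub_left, NfZ_sub_right, NfZ_add_left, NfZ_add_right, hEl,
      NfZ_E_left]
    rw [if_neg hl0]
    rw [NfZ_comm r f' n, hnf, hsq, hf1, hfl]
    have hr0 : r ≠ 0 := by omega
    simp [EZ, hfl, hr0]
    ring
  · simp only [NfZ_sub_left, NfZ_add_left, NfZ_E_K, hK, hf2]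
    rw [if_neg hl0]
    ring
  · ring
  · intro h
    have := congrFun h (Fin.last r)
    simp [EZ, hfl] at this
  · intro h
    have := congrFun h (Fin.last r)
    simp [EZ, hfl] at this
    omega

lemma build_pair (r : ℕ) (h4 : 4 ≤ r) (h7 : r ≤ 7) (n : Fin (r + 1) → ℤ)
    (hsq : NfZ r n n = -1) (hK : NfZ r n (KZ r) = -1)
    (hge : ∀ f, NfZ r f f = -1 → NfZ r f (KZ r) = -1 → n ≠ f → 0 ≤ NfZ r n f)
    (hm : n (Fin.last r) ≤ -1) :
    ∃ f f' : Fin (r + 1) → ℤ,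
      NfZ r f f = -1 ∧ NfZ r f (KZ r) = -1 ∧ NfZ r f' f' = -1 ∧ NfZ r f' (KZ r) = -1 ∧
      f + f' = n + EZ r (Fin.last r) ∧ f ≠ n ∧ f ≠ EZ r (Fin.last r) := by
  have hl0 : Fin.last r ≠ 0 := last_ne_zero r h4
  rcases comb r h4 h7 n hsq hK hge hm with ⟨i, hi0, hil, hni⟩ | ⟨i, j, hi0, hj0, hil, hjl, hij, hcond⟩
  · obtain ⟨hf1, hf2⟩ := EZ_exc r hi0
    have hfl : EZ r i (Fin.last r) = 0 := by simp [EZ, Ne.symm hil]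
    have hnf : NfZ r n (EZ r i) = -1 - n (Fin.last r) := by
      rw [NfZ_E_right, if_neg hi0, hni]; ring
    obtain ⟨c1, c2, c3, c4, c5⟩ := build r h4 n hsq hK hm _ hf1 hf2 hfl hnf
    exact ⟨_, _, c1, c2, hf1, hf2, c3, c4, c5⟩
  · obtain ⟨hf1, hf2⟩ := line_exc r hi0 hj0 hij
    have hfl : (EZ r 0 - EZ r i - EZ r j) (Fin.last r) = 0 := by
      simp [EZ, Ne.symm hil, Ne.symm hjl, hl0]
    have hnf : NfZ r n (EZ r 0 - EZ r i - EZ r j) = -1 - n (Fin.last r) := by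
      simp only [NfZ_sub_right, NfZ_E_right]
      rw [if_neg hi0, if_neg hj0]
      simp
      omega
    obtain ⟨c1, c2, c3, c4, c5⟩ := build r h4 n hsq hK hm _ hf1 hf2 hfl hnf
    exact ⟨_, _, c1, c2, hf1, hf2, c3, c4, c5⟩

-- real-side toolkit
noncomputable def ellR (r : ℕ) : Fin (r + 1) → ℝ := fun i => if i = Fin.last r then 1 else 0

lemma NfR_comm (r : ℕ) (x y : Fin (r + 1) → ℝ) : NformR r x y = NformR r y x :=
  Finset.sum_congr rfl fun i _ => by split <;> ring

lemma NfR_add_left (r : ℕ) (a b y : Fin (r + 1) → ℝ) :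
    NformR r (a + b) y = NformR r a y + NformR r b y := by
  unfold NformR
  rw [← Finset.sum_add_distrib]
  exact Finset.sum_congr rfl fun i _ => by simp only [Pi.add_apply]; split <;> ring

lemma NfR_add_right (r : ℕ) (x a b : Fin (r + 1) → ℝ) :
    NformR r x (a + b) = NformR r x a + NformR r x b := by
  rw [NfR_comm, NfR_add_left, NfR_comm r a, NfR_comm r b]

lemma NfR_smul_left (r : ℕ) (c : ℝ) (a y : Fin (r + 1) → ℝ) :
    NformR r (c • a) y = c * NformR r a y := by
  unfold NformR
  rw [Finset.mul_sum]
  exact Finset.sum_congr rfl fun i _ => by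
    simp only [Pi.smul_apply, smul_eq_mul]; split <;> ring

lemma NfR_smul_right (r : ℕ) (c : ℝ) (x a : Fin (r + 1) → ℝ) :
    NformR r x (c • a) = c * NformR r x a := by
  rw [NfR_comm, NfR_smul_left, NfR_comm r a]

lemma NfR_ell_right (r : ℕ) (h4 : 4 ≤ r) (y : Fin (r + 1) → ℝ) :
    NformR r y (ellR r) = -(y (Fin.last r)) := by
  unfold NformR ellR
  rw [Finset.sum_eq_single (Fin.last r)]
  · simp [last_ne_zero r h4]
  · intro i _ hil
    simp [hil]
  · simp

lemma KvecR_last (r : ℕ) (h4 : 4 ≤ r) : KvecR r (Fin.last r) = 1 := by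
  simp [KvecR, last_ne_zero r h4]

lemma NfR_K_K (r : ℕ) : NformR r (KvecR r) (KvecR r) = 9 - r := by
  unfold NformR KvecR
  rw [← Finset.add_sum_erase _ _ (Finset.mem_univ (0 : Fin (r + 1)))]
  have h3 : ∑ i ∈ Finset.univ.erase (0 : Fin (r+1)),
      (if i = 0 then (if i = (0:Fin (r+1)) then (-3:ℝ) else 1) * (if i = (0:Fin (r+1)) then (-3:ℝ) else 1)
        else -((if i = (0:Fin (r+1)) then (-3:ℝ) else 1) * (if i = (0:Fin (r+1)) then (-3:ℝ) else 1))) =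
      ∑ i ∈ Finset.univ.erase (0 : Fin (r+1)), (-1 : ℝ) :=
    Finset.sum_congr rfl fun i hi => by simp [(Finset.mem_erase.1 hi).1]
  rw [h3, Finset.sum_const]
  have hcard : (Finset.univ.erase (0 : Fin (r+1))).card = r := by
    rw [Finset.card_erase_of_mem (Finset.mem_univ _)]; simp
  rw [hcard]
  simp
  ring

lemma KvecR_cast (r : ℕ) : KvecR r = fun i => ((KZ r i : ℤ) : ℝ) := by
  funext i
  simp [KvecR, KZ, apply_ite (fun t : ℤ => (t : ℝ))]

lemma ellR_cast (r : ℕ) : ellR r = fun i => ((EZ r (Fin.last r) i : ℤ) : ℝ) := by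
  funext i
  simp [ellR, EZ, apply_ite (fun t : ℤ => (t : ℝ))]

lemma NfZ_cast_K (r : ℕ) (u : Fin (r + 1) → ℤ) :
    NformR r (fun i => (u i : ℝ)) (KvecR r) = ((NfZ r u (KZ r) : ℤ) : ℝ) := by
  rw [KvecR_cast, NfZ_cast]

lemma NfR_shift (r : ℕ) (h7 : r ≤ 7) (g h : Fin (r + 1) → ℝ)
    (hgK : NformR r g (KvecR r) = -1) (hhK : NformR r h (KvecR r) = -1) :
    NformR r (g + (1 / (9 - (r : ℝ))) • KvecR r) (h + (1 / (9 - (r : ℝ))) • KvecR r) =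
      NformR r g h - 1 / (9 - (r : ℝ)) := by
  have hd : (9 : ℝ) - r ≠ 0 := by
    have : (r : ℝ) ≤ 7 := by exact_mod_cast h7
    linarith
  rw [NfR_add_left, NfR_add_right, NfR_add_right, NfR_smul_left, NfR_smul_right,
    NfR_smul_right, NfR_smul_left, NfR_K_K, hgK, NfR_comm r (KvecR r) h, hhK]
  field_simp
  ring

lemma orbit_of_int (r : ℕ) (f : Fin (r + 1) → ℤ)
    (hf1 : NfZ r f f = -1) (hf2 : NfZ r f (KZ r) = -1) :
    ((fun i => (f i : ℝ)) + (1 / (9 - (r : ℝ))) • KvecR r) ∈ WeightOrbit r := by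
  have key : (-(1 / (9 - (r : ℝ)))) • KvecR r +
      ((fun i => (f i : ℝ)) + (1 / (9 - (r : ℝ))) • KvecR r) = fun i => (f i : ℝ) := by
    funext i
    simp only [Pi.add_apply, Pi.smul_apply, smul_eq_mul]
    ring
  refine ⟨?_, ?_, ?_⟩ <;> rw [key]
  · exact fun i => ⟨f i, rfl⟩
  · rw [NfZ_cast]; exact_mod_cast hf1
  · rw [NfZ_cast_K]; exact_mod_cast hf2

lemma orbit_to_int (r : ℕ) (y : Fin (r + 1) → ℝ) (hy : y ∈ WeightOrbit r) :
    ∃ g : Fin (r + 1) → ℤ,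
      ((-(1 / (9 - (r : ℝ)))) • KvecR r + y = fun i => (g i : ℝ)) ∧
      NfZ r g g = -1 ∧ NfZ r g (KZ r) = -1 := by
  obtain ⟨hI, h1, h2⟩ := hy
  have hcast : (-(1 / (9 - (r : ℝ)))) • KvecR r + y = fun i => ((hI i).choose : ℝ) :=
    funext fun i => (hI i).choose_spec
  refine ⟨fun i => (hI i).choose, hcast, ?_, ?_⟩
  · rw [hcast, NfZ_cast] at h1; exact_mod_cast h1
  · rw [hcast, NfZ_cast_K] at h2; exact_mod_cast h2

noncomputable def phiF (r : ℕ) (q p : Fin (r + 1) → ℝ) : ℝ :=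
  ∑ i : Fin (r + 1), ((if i = 0 then (-1 : ℝ) else 1) * q i) * p i

lemma phiF_eq (r : ℕ) (q p : Fin (r + 1) → ℝ) : phiF r q p = -NformR r p q := by
  unfold phiF NformR
  rw [← Finset.sum_neg_distrib]
  exact Finset.sum_congr rfl fun i _ => by split <;> ring

lemma phiF_linear (r : ℕ) (q : Fin (r + 1) → ℝ) : IsLinearMap ℝ (phiF r q) := by
  constructor
  · intro p p'
    unfold phiF
    rw [← Finset.sum_add_distrib]
    exact Finset.sum_congr rfl fun i _ => by simp only [Pi.add_apply]; ring
  · intro c p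
    unfold phiF
    rw [smul_eq_mul, Finset.mul_sum]
    exact Finset.sum_congr rfl fun i _ => by
      simp only [Pi.smul_apply, smul_eq_mul]; ring

lemma segment_isExtreme (r : ℕ) (O : Set (Fin (r + 1) → ℝ))
    (x w q : Fin (r + 1) → ℝ) (c : ℝ)
    (hxO : x ∈ O) (hwO : w ∈ O)
    (hle : ∀ y ∈ O, phiF r q y ≤ c)
    (heq : ∀ y ∈ O, phiF r q y = c → y = x ∨ y = w)
    (hphix : phiF r q x = c) (hphiw : phiF r q w = c) :
    IsExtreme ℝ (convexHull ℝ O) (segment ℝ x w) := by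
  classical
  have hlin := phiF_linear r q
  have hhull : ∀ p ∈ convexHull ℝ O, phiF r q p ≤ c := fun p hp =>
    convexHull_min hle (convex_halfSpace_le hlin c) hp
  have hface : ∀ p ∈ convexHull ℝ O, phiF r q p = c → p ∈ segment ℝ x w := by
    intro p hp hpc
    rw [convexHull_eq] at hp
    obtain ⟨ι, t, wt, z, hw0, hw1, hz, rfl⟩ := hp
    have hcm : t.centerMass wt z = ∑ i ∈ t, wt i • z i :=
      Finset.centerMass_eq_of_sum_1 _ _ hw1
    have hphisum : phiF r q (t.centerMass wt z) = ∑ i ∈ t, wt i * phiF r q (z i) := by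
      rw [hcm]
      calc phiF r q (∑ i ∈ t, wt i • z i)
          = (IsLinearMap.mk' _ hlin) (∑ i ∈ t, wt i • z i) := rfl
        _ = ∑ i ∈ t, (IsLinearMap.mk' _ hlin) (wt i • z i) := map_sum _ _ _
        _ = ∑ i ∈ t, wt i * phiF r q (z i) := Finset.sum_congr rfl fun i _ => by
              rw [map_smul]
              simp [smul_eq_mul]
    have hzero : ∑ i ∈ t, wt i * (c - phiF r q (z i)) = 0 := by
      have hsplit : ∑ i ∈ t, wt i * (c - phiF r q (z i)) =
          (∑ i ∈ t, wt i) * c - ∑ i ∈ t, wt i * phiF r q (z i) := by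
        rw [Finset.sum_mul, ← Finset.sum_sub_distrib]
        exact Finset.sum_congr rfl fun i _ => by ring
      rw [hsplit, hw1, ← hphisum, hpc]
      ring
    have hnn : ∀ i ∈ t, 0 ≤ wt i * (c - phiF r q (z i)) := fun i hi =>
      mul_nonneg (hw0 i hi) (sub_nonneg.2 (hle _ (hz i hi)))
    have hterm := (Finset.sum_eq_zero_iff_of_nonneg hnn).1 hzero
    have key : ∀ i ∈ t, wt i ≠ 0 → z i ∈ ({x, w} : Set (Fin (r + 1) → ℝ)) := by
      intro i hi hwi
      have h := hterm i hi
      have hc : phiF r q (z i) = c := by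
        rcases mul_eq_zero.1 h with h' | h'
        · exact absurd h' hwi
        · linarith [sub_eq_zero.1 h']
      rcases heq _ (hz i hi) hc with h' | h' <;> simp [h']
    have hmem : t.centerMass wt z ∈ convexHull ℝ ({x, w} : Set (Fin (r + 1) → ℝ)) := by
      rw [← Finset.centerMass_filter_ne_zero]
      refine Finset.centerMass_mem_convexHull _ (fun i hi => hw0 i (Finset.mem_filter.1 hi).1)
        ?_ (fun i hi => key i (Finset.mem_filter.1 hi).1 (Finset.mem_filter.1 hi).2)
      rw [Finset.sum_filter_ne_zero, hw1]
      norm_num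
    rwa [convexHull_pair] at hmem
  constructor
  · exact (convex_convexHull ℝ O).segment_subset (subset_convexHull ℝ O hxO)
      (subset_convexHull ℝ O hwO)
  · intro y₁ hy₁ y₂ hy₂ p hpseg hpopen
    have hpc : phiF r q p = c := by
      obtain ⟨a, b, ha, hb, hab, rfl⟩ := hpseg
      rw [hlin.map_add, hlin.map_smul, hlin.map_smul, hphix, hphiw]
      simp only [smul_eq_mul]
      linear_combination c * hab
    obtain ⟨a, b, ha, hb, hab, hy⟩ := hpopen
    have h1 := hhull y₁ hy₁
    have h2 := hhull y₂ hy₂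
    have hsum : a * phiF r q y₁ + b * phiF r q y₂ = c := by
      rw [← hpc, ← hy, hlin.map_add, hlin.map_smul, hlin.map_smul]
      simp only [smul_eq_mul]
    have hzero2 : a * (c - phiF r q y₁) + b * (c - phiF r q y₂) = 0 := by
      linear_combination (-1 : ℝ) * hsum + c * hab
    have t1 : 0 ≤ a * (c - phiF r q y₁) := mul_nonneg ha.le (sub_nonneg.2 h1)
    have t2 : 0 ≤ b * (c - phiF r q y₂) := mul_nonneg hb.le (sub_nonneg.2 h2)
    have e1 : a * (c - phiF r q y₁) = 0 := by linarith
    have e2 : b * (c - phiF r q y₂) = 0 := by linarith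
    have hy1c : phiF r q y₁ = c := by
      rcases mul_eq_zero.1 e1 with h' | h'
      · exact absurd h' (ne_of_gt ha)
      · linarith
    have hy2c : phiF r q y₂ = c := by
      rcases mul_eq_zero.1 e2 with h' | h'
      · exact absurd h' (ne_of_gt hb)
      · linarith
    exact hface y₁ hy₁ hy1c

/-- For exceptional classes `e = -(1/d)K_r + x` and `e' = -(1/d)K_r + ω`
(`x ∈ Wω`): `(e,e') = 1/d + (x,ω)`; `(e,e') = 0` iff `x` and `ω` are adjacent
vertices of `Conv(Wω)`; and `(e,e') > 0` for all other `x ≠ ω`. -/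
theorem intersection_index_of_exceptional (r : ℕ) (h4 : 4 ≤ r) (h7 : r ≤ 7)
    (x : Fin (r + 1) → ℝ) (hx : x ∈ WeightOrbit r) :
    NformR r ((-(1 / (9 - (r : ℝ)))) • KvecR r + x)
        ((-(1 / (9 - (r : ℝ)))) • KvecR r + omegaR r) =
      1 / (9 - (r : ℝ)) + NformR r x (omegaR r) ∧
    (NformR r ((-(1 / (9 - (r : ℝ)))) • KvecR r + x)
        ((-(1 / (9 - (r : ℝ)))) • KvecR r + omegaR r) = 0 ↔
      Adjacent r (WeightOrbit r) x (omegaR r)) ∧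
    (x ≠ omegaR r → ¬ Adjacent r (WeightOrbit r) x (omegaR r) →
      0 < NformR r ((-(1 / (9 - (r : ℝ)))) • KvecR r + x)
        ((-(1 / (9 - (r : ℝ)))) • KvecR r + omegaR r)) := by

  classical
  have hr7 : (r : ℝ) ≤ 7 := by exact_mod_cast h7
  have hd : (9 : ℝ) - r ≠ 0 := by linarith
  have hs : 0 < 1 / (9 - (r : ℝ)) := by
    apply div_pos one_pos
    linarith
  have hl0 : Fin.last r ≠ (0 : Fin (r + 1)) := last_ne_zero r h4
  obtain ⟨hInt, hsqR, hKR⟩ := hx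
  choose n hn using hInt
  have hecast : (-(1 / (9 - (r : ℝ)))) • KvecR r + x = fun i => ((n i : ℤ) : ℝ) :=
    funext hn
  have hsqZ : NfZ r n n = -1 := by
    have h := hsqR
    rw [hecast, NfZ_cast] at h
    exact_mod_cast h
  have hKZ : NfZ r n (KZ r) = -1 := by
    have h := hKR
    rw [hecast, NfZ_cast_K] at h
    exact_mod_cast h
  have hA : (-(1 / (9 - (r : ℝ)))) • KvecR r + omegaR r = ellR r := by
    funext i
    simp only [omegaR, ellR, Pi.add_apply, Pi.smul_apply, smul_eq_mul]
    ring
  have hxval : x = (fun i => ((n i : ℤ) : ℝ)) + (1 / (9 - (r : ℝ))) • KvecR r := by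
    funext i
    have h := hn i
    simp only [Pi.add_apply, Pi.smul_apply, smul_eq_mul] at h ⊢
    linarith
  have hωval : omegaR r =
      (fun i => ((EZ r (Fin.last r) i : ℤ) : ℝ)) + (1 / (9 - (r : ℝ))) • KvecR r := by
    rw [← ellR_cast]
    rfl
  have epair : ∀ (u v : Fin (r + 1) → ℤ), NfZ r u (KZ r) = -1 → NfZ r v (KZ r) = -1 →
      NformR r ((fun i => ((u i : ℤ) : ℝ)) + (1 / (9 - (r : ℝ))) • KvecR r)
        ((fun i => ((v i : ℤ) : ℝ)) + (1 / (9 - (r : ℝ))) • KvecR r) =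
        ((NfZ r u v : ℤ) : ℝ) - 1 / (9 - (r : ℝ)) := by
    intro u v hu hv
    rw [NfR_shift r h7 _ _ (by rw [NfZ_cast_K]; exact_mod_cast hu)
      (by rw [NfZ_cast_K]; exact_mod_cast hv), NfZ_cast]
  have hMain : NformR r ((-(1 / (9 - (r : ℝ)))) • KvecR r + x)
      ((-(1 / (9 - (r : ℝ)))) • KvecR r + omegaR r) = ((-(n (Fin.last r)) : ℤ) : ℝ) := by
    rw [hA, hecast, NfR_ell_right r h4]
    push_cast
    ring
  have hc1 : NformR r ((-(1 / (9 - (r : ℝ)))) • KvecR r + x)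
      ((-(1 / (9 - (r : ℝ)))) • KvecR r + omegaR r) =
      1 / (9 - (r : ℝ)) + NformR r x (omegaR r) := by
    rw [hMain, hxval, hωval, epair n (EZ r (Fin.last r)) hKZ (EZ_exc r hl0).2,
      NfZ_E_right, if_neg hl0]
    push_cast
    ring
  have hxw : x = omegaR r ↔ n = EZ r (Fin.last r) := by
    constructor
    · intro h
      have hcc : (fun i => ((n i : ℤ) : ℝ)) = fun i => ((EZ r (Fin.last r) i : ℤ) : ℝ) := by
        rw [← hecast, h, hA, ellR_cast]
      funext i
      exact_mod_cast congrFun hcc i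
    · intro h
      rw [hxval, hωval, h]
  have hM0 : x ≠ omegaR r → 0 ≤ -(n (Fin.last r)) := by
    intro hne
    have hnne : n ≠ EZ r (Fin.last r) := fun h => hne (hxw.2 h)
    have h := pair_nonneg r h4 h7 n (EZ r (Fin.last r)) hsqZ hKZ (EZ_exc r hl0).1
      (EZ_exc r hl0).2 hnne
    rw [NfZ_E_right, if_neg hl0] at h
    omega
  have hxO : x ∈ WeightOrbit r := by
    rw [hxval]
    exact orbit_of_int r n hsqZ hKZ
  have hωO : omegaR r ∈ WeightOrbit r := by
    rw [hωval]
    exact orbit_of_int r (EZ r (Fin.last r)) (EZ_exc r hl0).1 (EZ_exc r hl0).2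
  have Hfwd : n (Fin.last r) = 0 → Adjacent r (WeightOrbit r) x (omegaR r) := by
    intro hM
    have hnne : x ≠ omegaR r := by
      intro h
      have hc := congrFun (hxw.1 h) (Fin.last r)
      simp [EZ] at hc
      omega
    refine ⟨hnne, ?_⟩
    set q : Fin (r + 1) → ℝ := x + omegaR r with hq
    set c : ℝ := 2 * (1 / (9 - (r : ℝ))) + 1 with hc
    have hφ : ∀ (g : Fin (r + 1) → ℤ), NfZ r g (KZ r) = -1 →
        phiF r q ((fun i => ((g i : ℤ) : ℝ)) + (1 / (9 - (r : ℝ))) • KvecR r) =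
          2 * (1 / (9 - (r : ℝ))) - ((NfZ r g n : ℤ) : ℝ)
            - ((NfZ r g (EZ r (Fin.last r)) : ℤ) : ℝ) := by
      intro g hg
      rw [phiF_eq, hq, NfR_add_right]
      nth_rewrite 1 [hxval]
      nth_rewrite 1 [hωval]
      rw [epair g n hg hKZ, epair g (EZ r (Fin.last r)) hg (EZ_exc r hl0).2]
      ring
    have hφx : phiF r q x = c := by
      nth_rewrite 1 [hxval]
      rw [hφ n hKZ, hsqZ, NfZ_E_right, if_neg hl0, hM]
      push_cast
      ring
    have hφω : phiF r q (omegaR r) = c := by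
      nth_rewrite 1 [hωval]
      rw [hφ (EZ r (Fin.last r)) (EZ_exc r hl0).2, (EZ_exc r hl0).1,
        NfZ_comm r (EZ r (Fin.last r)) n, NfZ_E_right, if_neg hl0, hM]
      push_cast
      ring
    have key : ∀ y ∈ WeightOrbit r,
        phiF r q y ≤ c ∧ (phiF r q y = c → y = x ∨ y = omegaR r) := by
      intro y hy
      obtain ⟨g, hgcast, hg1, hg2⟩ := orbit_to_int r y hy
      have hyval : y = (fun i => ((g i : ℤ) : ℝ)) + (1 / (9 - (r : ℝ))) • KvecR r := by
        funext i
        have h := congrFun hgcast i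
        simp only [Pi.add_apply, Pi.smul_apply, smul_eq_mul] at h ⊢
        linarith
      by_cases hgn : g = n
      · have hyx : y = x := by rw [hyval, hgn, ← hxval]
        rw [hyx, hφx]
        exact ⟨le_refl _, fun _ => Or.inl rfl⟩
      by_cases hgE : g = EZ r (Fin.last r)
      · have hyω : y = omegaR r := by rw [hyval, hgE, ← hωval]
        rw [hyω, hφω]
        exact ⟨le_refl _, fun _ => Or.inr rfl⟩
      have hval : phiF r q y = 2 * (1 / (9 - (r : ℝ))) - ((NfZ r g n : ℤ) : ℝ)
          - ((NfZ r g (EZ r (Fin.last r)) : ℤ) : ℝ) := by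
        nth_rewrite 1 [hyval]
        exact hφ g hg2
      have hA1 : (0 : ℤ) ≤ NfZ r g n := pair_nonneg r h4 h7 g n hg1 hg2 hsqZ hKZ hgn
      have hB1 : (0 : ℤ) ≤ NfZ r g (EZ r (Fin.last r)) :=
        pair_nonneg r h4 h7 g (EZ r (Fin.last r)) hg1 hg2 (EZ_exc r hl0).1
          (EZ_exc r hl0).2 hgE
      have hA1' : (0 : ℝ) ≤ ((NfZ r g n : ℤ) : ℝ) := by exact_mod_cast hA1
      have hB1' : (0 : ℝ) ≤ ((NfZ r g (EZ r (Fin.last r)) : ℤ) : ℝ) := by exact_mod_cast hB1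
      constructor
      · rw [hval, hc]
        linarith
      · intro hcc
        rw [hval, hc] at hcc
        linarith
    exact segment_isExtreme r (WeightOrbit r) x (omegaR r) q c hxO hωO
      (fun y hy => (key y hy).1) (fun y hy => (key y hy).2) hφx hφω
  have Hbwd : Adjacent r (WeightOrbit r) x (omegaR r) → n (Fin.last r) = 0 := by
    rintro ⟨hne, hext⟩
    have h0 := hM0 hne
    by_contra hMne
    have hm : n (Fin.last r) ≤ -1 := by omega
    have hgeN : ∀ f, NfZ r f f = -1 → NfZ r f (KZ r) = -1 → n ≠ f → 0 ≤ NfZ r n f :=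
      fun f hf1 hf2 hnf => pair_nonneg r h4 h7 n f hsqZ hKZ hf1 hf2 hnf
    obtain ⟨f, f', hf1, hf2, hf'1, hf'2, hsum, hfn, hfE⟩ :=
      build_pair r h4 h7 n hsqZ hKZ hgeN hm
    set y : Fin (r + 1) → ℝ := (fun i => ((f i : ℤ) : ℝ)) + (1 / (9 - (r : ℝ))) • KvecR r
      with hydef
    set z : Fin (r + 1) → ℝ := (fun i => ((f' i : ℤ) : ℝ)) + (1 / (9 - (r : ℝ))) • KvecR r
      with hzdef
    have hyO : y ∈ WeightOrbit r := orbit_of_int r f hf1 hf2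
    have hzO : z ∈ WeightOrbit r := orbit_of_int r f' hf'1 hf'2
    have hyz : y + z = x + omegaR r := by
      funext i
      have hsi := congrFun hsum i
      have hxi := congrFun hxval i
      have hωi := congrFun hωval i
      simp only [hydef, hzdef, Pi.add_apply, Pi.smul_apply, smul_eq_mul] at hsi hxi hωi ⊢
      have hcc : ((f i : ℤ) : ℝ) + ((f' i : ℤ) : ℝ) =
          ((n i : ℤ) : ℝ) + ((EZ r (Fin.last r) i : ℤ) : ℝ) := by
        exact_mod_cast hsi
      rw [hxi, hωi]
      linarith
    have hpseg : (1 / 2 : ℝ) • x + (1 / 2 : ℝ) • omegaR r ∈ segment ℝ x (omegaR r) :=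
      ⟨1 / 2, 1 / 2, by norm_num, by norm_num, by norm_num, rfl⟩
    have hpopen : (1 / 2 : ℝ) • x + (1 / 2 : ℝ) • omegaR r ∈ openSegment ℝ y z := by
      refine ⟨1 / 2, 1 / 2, by norm_num, by norm_num, by norm_num, ?_⟩
      rw [← smul_add, hyz, smul_add]
    obtain hyseg := hext.2 (subset_convexHull ℝ _ hyO) (subset_convexHull ℝ _ hzO)
      hpseg hpopen
    obtain ⟨a, b, ha, hb, hab, hyab⟩ := hyseg
    have hcastf : (fun i => ((f i : ℤ) : ℝ)) =
        a • (fun i => ((n i : ℤ) : ℝ)) + b • (fun i => ((EZ r (Fin.last r) i : ℤ) : ℝ)) := by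
      funext i
      have h1 := congrFun hyab i
      rw [hxval, hωval, hydef] at h1
      simp only [Pi.add_apply, Pi.smul_apply, smul_eq_mul] at h1 ⊢
      linear_combination (-1 : ℝ) * h1 + (1 / (9 - (r : ℝ))) * KvecR r i * hab
    have hMge1 : (1 : ℝ) ≤ ((-(n (Fin.last r)) : ℤ) : ℝ) := by
      exact_mod_cast (by omega : (1 : ℤ) ≤ -(n (Fin.last r)))
    have v1 : NformR r (fun i => ((n i : ℤ) : ℝ)) (fun i => ((n i : ℤ) : ℝ)) = -1 := by
      rw [NfZ_cast]
      exact_mod_cast hsqZ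
    have v2 : NformR r (fun i => ((n i : ℤ) : ℝ)) (fun i => ((EZ r (Fin.last r) i : ℤ) : ℝ)) =
        ((-(n (Fin.last r)) : ℤ) : ℝ) := by
      rw [NfZ_cast, NfZ_E_right, if_neg hl0]
    have v3 : NformR r (fun i => ((EZ r (Fin.last r) i : ℤ) : ℝ)) (fun i => ((n i : ℤ) : ℝ)) =
        ((-(n (Fin.last r)) : ℤ) : ℝ) := by
      rw [NfR_comm]
      exact v2
    have v4 : NformR r (fun i => ((EZ r (Fin.last r) i : ℤ) : ℝ))
        (fun i => ((EZ r (Fin.last r) i : ℤ) : ℝ)) = -1 := by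
      rw [NfZ_cast]
      exact_mod_cast (EZ_exc r hl0).1
    have vf : NformR r (fun i => ((f i : ℤ) : ℝ)) (fun i => ((f i : ℤ) : ℝ)) = -1 := by
      rw [NfZ_cast]
      exact_mod_cast hf1
    have hquad : NformR r (fun i => ((f i : ℤ) : ℝ)) (fun i => ((f i : ℤ) : ℝ)) =
        a * a * (-1) + a * b * ((-(n (Fin.last r)) : ℤ) : ℝ)
        + b * a * ((-(n (Fin.last r)) : ℤ) : ℝ) + b * b * (-1) := by
      nth_rewrite 1 [hcastf]
      nth_rewrite 1 [hcastf]
      simp only [NfR_add_left, NfR_add_right, NfR_smul_left, NfR_smul_right]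
      rw [v1, v2, v3, v4]
      ring
    have heqq : (-1 : ℝ) = a * a * (-1) + a * b * ((-(n (Fin.last r)) : ℤ) : ℝ)
        + b * a * ((-(n (Fin.last r)) : ℤ) : ℝ) + b * b * (-1) := by
      rw [← hquad, vf]
    have hab0 : a * b = 0 := by nlinarith [heqq, hab, hMge1]
    rcases mul_eq_zero.1 hab0 with hz0 | hz0
    · -- a = 0, so f = EZ last
      apply hfE
      have : (fun i => ((f i : ℤ) : ℝ)) = fun i => ((EZ r (Fin.last r) i : ℤ) : ℝ) := by
        rw [hcastf, hz0]
        funext i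
        simp only [Pi.add_apply, Pi.smul_apply, smul_eq_mul]
        have hb1 : b = 1 := by linarith
        rw [hb1]
        ring
      funext i
      exact_mod_cast congrFun this i
    · -- b = 0, so f = n
      apply hfn
      have : (fun i => ((f i : ℤ) : ℝ)) = fun i => ((n i : ℤ) : ℝ) := by
        rw [hcastf, hz0]
        funext i
        simp only [Pi.add_apply, Pi.smul_apply, smul_eq_mul]
        have ha1 : a = 1 := by linarith
        rw [ha1]
        ring
      funext i
      exact_mod_cast congrFun this i
  refine ⟨hc1, ?_, ?_⟩
  · rw [hMain]
    constructor
    · intro h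
      apply Hfwd
      have : (-(n (Fin.last r)) : ℤ) = 0 := by exact_mod_cast h
      omega
    · intro h
      rw [Hbwd h]
      simp
  · intro hne hnadj
    rw [hMain]
    have h1 := hM0 hne
    have h2 : n (Fin.last r) ≠ 0 := fun h => hnadj (Hfwd h)
    exact_mod_cast (by omega : (0 : ℤ) < -(n (Fin.last r)))
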